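/- In an exact category, the pullback of an inflation along a deflation exists and is an inflation, and the pushout of a deflation along an inflation exists and is a deflation. -/
import Mathlib


open CategoryTheory CategoryTheory.Limits ZeroObject

universe v u

namespace ExactCatPaper

variable (E : Type u) [Category.{v} E] [Preadditive E] [HasZeroObject E]

/-- An exact structure on an additive category `E`, following Quillen/Keller:
a class of conflations (kernel–cokernel pairs) closed under isomorphism,
containing identities, with deflations closed under composition and stable
under pullback, and inflations stable under pushout. -/
structure ExactStructure where
  conf : ∀ {X Y Z : E}, (X ⟶ Y) → (Y ⟶ Z) → Prop
  comp_zero : ∀ {X Y Z : E} {i : X ⟶ Y} {d : Y ⟶ Z}, conf i d → i ≫ d = 0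
  is_kernel : ∀ {X Y Z : E} {i : X ⟶ Y} {d : Y ⟶ Z}, conf i d →
    ∀ {W : E} (f : W ⟶ Y), f ≫ d = 0 → ∃! g : W ⟶ X, g ≫ i = f
  is_cokernel : ∀ {X Y Z : E} {i : X ⟶ Y} {d : Y ⟶ Z}, conf i d →
    ∀ {W : E} (f : Y ⟶ W), i ≫ f = 0 → ∃! g : Z ⟶ W, d ≫ g = f
  conf_iso : ∀ {X Y Z X' Y' Z' : E} (eX : X ≅ X') (eY : Y ≅ Y') (eZ : Z ≅ Z')
      {i : X ⟶ Y} {d : Y ⟶ Z}, conf i d →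
      conf (eX.inv ≫ i ≫ eY.hom) (eY.inv ≫ d ≫ eZ.hom)
  conf_id : ∀ X : E, conf (0 : (0 : E) ⟶ X) (𝟙 X)
  defl_comp : ∀ {X Y Z : E} {d : X ⟶ Y} {d' : Y ⟶ Z},
      (∃ (A : E) (i : A ⟶ X), conf i d) → (∃ (A : E) (i : A ⟶ Y), conf i d') →
      ∃ (A : E) (i : A ⟶ X), conf i (d ≫ d')
  pullback_defl : ∀ {Y Z W : E} (d : Y ⟶ Z) (f : W ⟶ Z),
      (∃ (A : E) (i : A ⟶ Y), conf i d) →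
      ∃ (P : E) (p₁ : P ⟶ Y) (p₂ : P ⟶ W), IsPullback p₁ p₂ d f ∧
        ∃ (A : E) (i : A ⟶ P), conf i p₂
  pushout_infl : ∀ {X Y W : E} (i : X ⟶ Y) (f : X ⟶ W),
      (∃ (Z : E) (d : Y ⟶ Z), conf i d) →
      ∃ (P : E) (j : W ⟶ P) (g : Y ⟶ P), IsPushout i f g j ∧
        ∃ (Z : E) (d : P ⟶ Z), conf j d

variable {E}

/-- `i` is an inflation: it is part of some conflation. -/
def ExactStructure.IsInflation (S : ExactStructure E) {X Y : E} (i : X ⟶ Y) : Prop :=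
  ∃ (Z : E) (d : Y ⟶ Z), S.conf i d

/-- `d` is a deflation: it is part of some conflation. -/
def ExactStructure.IsDeflation (S : ExactStructure E) {Y Z : E} (d : Y ⟶ Z) : Prop :=
  ∃ (X : E) (i : X ⟶ Y), S.conf i d

/-- The right Hom-orthogonal `T^{⊥₀}` of a full subcategory. -/
def homOrthRight (T : Set E) : Set E :=
  {X | ∀ t ∈ T, ∀ f : t ⟶ X, f = 0}

/-- The left Hom-orthogonal `^{⊥₀}F` of a full subcategory. -/
def homOrthLeft (F : Set E) : Set E :=
  {X | ∀ f' ∈ F, ∀ g : X ⟶ f', g = 0}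

/-- A full subcategory is closed under extensions. -/
def ExtClosed (S : ExactStructure E) (T : Set E) : Prop :=
  ∀ {X Y Z : E} {i : X ⟶ Y} {d : Y ⟶ Z}, S.conf i d → X ∈ T → Z ∈ T → Y ∈ T

/-- `T` is weakly right admissible: a fully exact (extension-closed) subcategory such that
the inclusion admits a right adjoint (expressed pointwise as a coreflection) whose
adjunction counit is an inflation. -/
def IsWeaklyRightAdmissible (S : ExactStructure E) (T : Set E) : Prop :=
  ExtClosed S T ∧
  ∀ X : E, ∃ (T' : E) (ε : T' ⟶ X), T' ∈ T ∧ S.IsInflation ε ∧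
    ∀ W : E, W ∈ T → ∀ f : W ⟶ X, ∃! g : W ⟶ T', g ≫ ε = f

/-- `F` is weakly left admissible: the dual notion. -/
def IsWeaklyLeftAdmissible (S : ExactStructure E) (F : Set E) : Prop :=
  ExtClosed S F ∧
  ∀ X : E, ∃ (F' : E) (η : X ⟶ F'), F' ∈ F ∧ S.IsDeflation η ∧
    ∀ W : E, W ∈ F → ∀ f : X ⟶ W, ∃! g : F' ⟶ W, η ≫ g = f

/-- `(T, F)` is a torsion pair: `Hom(T,F) = 0` and every object fits into a conflation
with torsion part in `T` and torsion-free part in `F`. -/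
def IsTorsionPair (S : ExactStructure E) (T F : Set E) : Prop :=
  (∀ t ∈ T, ∀ f ∈ F, ∀ g : t ⟶ f, g = 0) ∧
  ∀ X : E, ∃ (t f : E) (i : t ⟶ X) (d : X ⟶ f), t ∈ T ∧ f ∈ F ∧ S.conf i d

/-- The right perpendicular subcategory `T^⊥` (Hom and Ext¹ vanishing; Ext¹-vanishing is
expressed by the splitting of all conflations `X → M → t` with `t ∈ T`). -/
def rightPerp (S : ExactStructure E) (T : Set E) : Set E :=
  {X | ∀ t ∈ T, (∀ f : t ⟶ X, f = 0) ∧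
    ∀ (M : E) (i : X ⟶ M) (d : M ⟶ t), S.conf i d → ∃ r : M ⟶ X, i ≫ r = 𝟙 X}

/-- A torsion pair `(T,F)` is perpendicular if moreover `Ext¹(T,F) = 0`, i.e. every
conflation `f' → X → t` with `f' ∈ F`, `t ∈ T` splits. -/
def IsPerpTorsionPair (S : ExactStructure E) (T F : Set E) : Prop :=
  IsTorsionPair S T F ∧
  ∀ {f' X t : E} (i : f' ⟶ X) (d : X ⟶ t), S.conf i d → f' ∈ F → t ∈ T →
    ∃ r : X ⟶ f', i ≫ r = 𝟙 f'


theorem ExactStructure.mono_of_conf (S : ExactStructure E) {X Y Z : E} {i : X ⟶ Y} {d : Y ⟶ Z}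
    (h : S.conf i d) : Mono i := by
  constructor
  intro V a b hab
  have h0 : (b ≫ i) ≫ d = 0 := by rw [Category.assoc, S.comp_zero h, Limits.comp_zero]
  obtain ⟨w, -, huniq⟩ := S.is_kernel h (b ≫ i) h0
  rw [huniq a hab, huniq b rfl]

theorem ExactStructure.epi_of_conf (S : ExactStructure E) {X Y Z : E} {i : X ⟶ Y} {d : Y ⟶ Z}
    (h : S.conf i d) : Epi d := by
  constructor
  intro V u v huv
  have h0 : i ≫ d ≫ u = 0 := by rw [← Category.assoc, S.comp_zero h, Limits.zero_comp]
  obtain ⟨w, -, huniq⟩ := S.is_cokernel h (d ≫ u) h0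
  rw [huniq u rfl, huniq v huv.symm]

theorem ExactStructure.conf_isoCod (S : ExactStructure E) {X Y Z Z' : E} {i : X ⟶ Y} {d : Y ⟶ Z}
    (e : Z ≅ Z') (h : S.conf i d) : S.conf i (d ≫ e.hom) := by
  simpa using S.conf_iso (Iso.refl X) (Iso.refl Y) e h


/-- Pushout half. -/
theorem po_half (S : ExactStructure E) :
    ∀ {X Y W : E} (d : X ⟶ Y) (i : X ⟶ W), S.IsDeflation d → S.IsInflation i →
      ∃ (P : E) (q₁ : Y ⟶ P) (q₂ : W ⟶ P), IsPushout d i q₁ q₂ ∧ S.IsDeflation q₂ := by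
  rintro X Y W d i ⟨K, iX, hiX⟩ ⟨C, dW, hdW⟩
  -- Step 1: pushout of i along d
  obtain ⟨P, j, g, HPO, ⟨T, t, hjt⟩⟩ := S.pushout_infl i d ⟨C, dW, hdW⟩
  have hw : i ≫ g = d ≫ j := HPO.w
  have hjt0 : j ≫ t = 0 := S.comp_zero hjt
  have hiXd : iX ≫ d = 0 := S.comp_zero hiX
  have hidW : i ≫ dW = 0 := S.comp_zero hdW
  have mono_i : Mono i := S.mono_of_conf hdW
  have mono_iX : Mono iX := S.mono_of_conf hiX
  have mono_j : Mono j := S.mono_of_conf hjt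
  have epi_dW : Epi dW := S.epi_of_conf hdW
  have epi_t : Epi t := S.epi_of_conf hjt
  -- Step 2: u : P ⟶ C
  have hu0 : i ≫ dW = d ≫ (0 : Y ⟶ C) := by rw [hidW, Limits.comp_zero]
  set u : P ⟶ C := HPO.desc dW 0 hu0 with hu_def
  have hgu : g ≫ u = dW := HPO.inl_desc _ _ _
  have hju : j ≫ u = 0 := HPO.inr_desc _ _ _
  -- Step 3: φ : C ≅ T with dW ≫ φ = g ≫ t
  have higt : i ≫ g ≫ t = 0 := by rw [← Category.assoc, hw, Category.assoc, hjt0, Limits.comp_zero]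
  obtain ⟨φ, hφ, -⟩ := S.is_cokernel hdW (g ≫ t) higt
  obtain ⟨ψ, hψ, -⟩ := S.is_cokernel hjt u hju
  have hφψ : φ ≫ ψ = 𝟙 C := by
    rw [← cancel_epi dW, ← Category.assoc, hφ, Category.assoc, hψ, hgu, Category.comp_id]
  have huφ : u ≫ φ = t := by
    apply HPO.hom_ext
    · rw [← Category.assoc, hgu, hφ]
    · rw [← Category.assoc, hju, Limits.zero_comp, hjt0]
  have hψφ : ψ ≫ φ = 𝟙 T := by
    rw [← cancel_epi t, ← Category.assoc, hψ, huφ, Category.comp_id]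
  have hgt_conf : S.conf i (g ≫ t) := by
    have := S.conf_isoCod (Iso.mk φ ψ hφψ hψφ) hdW
    rwa [show (Iso.mk φ ψ hφψ hψφ).hom = φ from rfl, hφ] at this
  -- Step 4: k := iX ≫ i is a kernel of g
  set k : K ⟶ W := iX ≫ i with hk_def
  have mono_k : Mono k := mono_comp _ _
  have hkg : k ≫ g = 0 := by
    rw [hk_def, Category.assoc, hw, ← Category.assoc, hiXd, Limits.zero_comp]
  have hker : ∀ {V : E} (v : V ⟶ W), v ≫ g = 0 → ∃! w : V ⟶ K, w ≫ k = v := by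
    intro V v hv
    have hvdW : v ≫ dW = 0 := by
      have h1 : v ≫ dW ≫ φ = 0 := by
        rw [hφ, ← Category.assoc, hv, Limits.zero_comp]
      have := congrArg (· ≫ ψ) h1
      simpa [Category.assoc, hφψ] using this
    obtain ⟨v₁, hv₁, -⟩ := S.is_kernel hdW v hvdW
    have hv₁d : v₁ ≫ d = 0 := by
      rw [← cancel_mono j, Category.assoc, ← hw, ← Category.assoc, hv₁, hv, Limits.zero_comp]
    obtain ⟨v₂, hv₂, -⟩ := S.is_kernel hiX v₁ hv₁d
    have h2 : v₂ ≫ k = v := by rw [hk_def, ← Category.assoc, hv₂, hv₁]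
    refine ⟨v₂, h2, ?_⟩
    intro w' hw'
    have hw'' : w' ≫ k = v := hw'
    rw [← cancel_mono k, hw'', h2]
  -- Step 5: V-block : pullback of t along (g ≫ t)
  obtain ⟨V, p₁, p₂, HV, ⟨Av, κv, hκv⟩⟩ := S.pullback_defl (g ≫ t) t ⟨X, i, hgt_conf⟩
  have hVw : p₁ ≫ g ≫ t = p₂ ≫ t := HV.w
  -- Step 6: U-block : pullback of (g ≫ t) along itself
  obtain ⟨U, a, b, HU, -⟩ := S.pullback_defl (g ≫ t) (g ≫ t) ⟨X, i, hgt_conf⟩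
  have hUw : a ≫ g ≫ t = b ≫ g ≫ t := HU.w
  -- Step 7: σ : V ⟶ Y
  obtain ⟨σ, hσ, -⟩ := S.is_kernel hjt (p₂ - p₁ ≫ g)
    (by rw [Preadditive.sub_comp, Category.assoc, hVw, sub_self])
  -- Step 8: τ : U ⟶ X
  obtain ⟨τ, hτ, -⟩ := S.is_kernel hdW (b - a)
    (by
      have h1 : (b - a) ≫ g ≫ t = 0 := by
        rw [Preadditive.sub_comp, hUw, sub_self]
      have h2 : (b - a) ≫ dW ≫ φ = 0 := by rw [hφ, h1]
      have := congrArg (· ≫ ψ) h2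
      simpa [Category.assoc, hφψ] using this)
  -- Step 9: μ : U ⟶ V
  set μ : U ⟶ V := HV.lift a (b ≫ g) (by rw [hUw, Category.assoc]) with hμ_def
  have hμ₁ : μ ≫ p₁ = a := HV.lift_fst _ _ _
  have hμ₂ : μ ≫ p₂ = b ≫ g := HV.lift_snd _ _ _
  -- Step 10: IsPullback τ μ d σ
  have hcomm : τ ≫ d = μ ≫ σ := by
    rw [← cancel_mono j, Category.assoc, ← hw, ← Category.assoc, hτ, Category.assoc, hσ,
      Preadditive.comp_sub, hμ₂, ← Category.assoc, hμ₁, Preadditive.sub_comp]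
  have lift10 : ∀ s : PullbackCone d σ, ∃ l : s.pt ⟶ U,
      l ≫ a = s.snd ≫ p₁ ∧ l ≫ b = s.snd ≫ p₁ + s.fst ≫ i := by
    intro s
    refine ⟨HU.lift (s.snd ≫ p₁) (s.snd ≫ p₁ + s.fst ≫ i) ?_, HU.lift_fst _ _ _, HU.lift_snd _ _ _⟩
    rw [Preadditive.add_comp, Category.assoc (s.fst) i, higt, Limits.comp_zero, add_zero]
  have HPB2 : IsPullback τ μ d σ := by
    apply IsPullback.of_isLimit (c := PullbackCone.mk τ μ hcomm)
    refine PullbackCone.IsLimit.mk hcomm (fun s => (lift10 s).choose) ?_ ?_ ?_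
    · intro s
      obtain ⟨ha, hb⟩ := (lift10 s).choose_spec
      rw [← cancel_mono i, Category.assoc, hτ, Preadditive.comp_sub, ha, hb]
      abel
    · intro s
      obtain ⟨ha, hb⟩ := (lift10 s).choose_spec
      apply HV.hom_ext
      · rw [Category.assoc, hμ₁, ha]
      · rw [Category.assoc, hμ₂, ← Category.assoc, hb, Preadditive.add_comp,
          Category.assoc s.fst i g, hw, ← Category.assoc s.fst d j, s.condition,
          Category.assoc s.snd σ j, hσ, Preadditive.comp_sub, Category.assoc]
        abel
    · intro s m hm1 hm2
      obtain ⟨ha, hb⟩ := (lift10 s).choose_spec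
      apply HU.hom_ext
      · rw [ha, ← hm2, Category.assoc, hμ₁]
      · rw [hb, ← hm1, ← hm2]
        calc m ≫ b = m ≫ a + (m ≫ τ) ≫ i := by
              rw [Category.assoc, hτ, Preadditive.comp_sub]; abel
        _ = (m ≫ μ) ≫ p₁ + (m ≫ τ) ≫ i := by rw [Category.assoc m μ p₁, hμ₁]
  -- Step 11: μ is a deflation
  obtain ⟨U₂, q₁, q₂, H₂, ⟨A₂, κ₂, hκ₂⟩⟩ := S.pullback_defl d σ ⟨K, iX, hiX⟩
  have hμ_defl : ∃ (A : E) (ι : A ⟶ U), S.conf ι μ := by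
    obtain ⟨ε, hεμ⟩ : ∃ ε : U₂ ≅ U, ε.hom ≫ μ = q₂ :=
      ⟨_, IsPullback.isoIsPullback_hom_snd (h := H₂) (h' := HPB2)⟩
    have h := S.conf_iso (Iso.refl A₂) ε (Iso.refl V) hκ₂
    simp only [Iso.refl_inv, Iso.refl_hom, Category.id_comp, Category.comp_id] at h
    have hεinv : ε.inv ≫ q₂ = μ := by rw [← hεμ, ← Category.assoc, ε.inv_hom_id, Category.id_comp]
    rw [hεinv] at h
    exact ⟨A₂, κ₂ ≫ ε.hom, h⟩
  -- Step 12: E := b ≫ g is a deflation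
  obtain ⟨M, κ, hκE⟩ := S.defl_comp hμ_defl ⟨Av, κv, hκv⟩
  rw [hμ₂] at hκE
  -- hκE : S.conf κ (b ≫ g)
  have hκE0 : κ ≫ b ≫ g = 0 := S.comp_zero hκE
  -- Step 13: section s0 of b
  set s0 : W ⟶ U := HU.lift (𝟙 W) (𝟙 W) rfl with hs0_def
  have hs0a : s0 ≫ a = 𝟙 W := HU.lift_fst _ _ _
  have hs0b : s0 ≫ b = 𝟙 W := HU.lift_snd _ _ _
  have hb_cancel : ∀ {V₀ : E} (x y : W ⟶ V₀), b ≫ x = b ≫ y → x = y := by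
    intro V₀ x y hxy
    calc x = (s0 ≫ b) ≫ x := by rw [hs0b, Category.id_comp]
    _ = (s0 ≫ b) ≫ y := by rw [Category.assoc, hxy, ← Category.assoc]
    _ = y := by rw [hs0b, Category.id_comp]
  -- Step 14: χ : M ⟶ K
  obtain ⟨χ, hχ, -⟩ := hker (κ ≫ b) (by rw [Category.assoc]; exact hκE0)
  -- Step 15: g is epi
  have epi_E : Epi (b ≫ g) := S.epi_of_conf hκE
  have epi_g : Epi g := by
    constructor
    intro V₀ x y hxy
    have : (b ≫ g) ≫ x = (b ≫ g) ≫ y := by rw [Category.assoc, hxy, Category.assoc]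
    exact (cancel_epi (b ≫ g)).mp this
  -- Step 16: g is a cokernel of k
  have hcoker_g : ∀ {V₀ : E} (h' : W ⟶ V₀), k ≫ h' = 0 → ∃! v : P ⟶ V₀, g ≫ v = h' := by
    intro V₀ h' hh'
    have h0 : κ ≫ b ≫ h' = 0 := by
      rw [← Category.assoc, ← hχ, Category.assoc, hh', Limits.comp_zero]
    obtain ⟨v, hv, -⟩ := S.is_cokernel hκE (b ≫ h') h0
    have hgv : g ≫ v = h' := by
      apply hb_cancel
      rw [← Category.assoc]; exact hv
    exact ⟨v, hgv, fun v' hv' => by rw [← cancel_epi g, hv', hgv]⟩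
  -- Step 17: IsPushout κ χ b k
  have hcomm17 : κ ≫ b = χ ≫ k := hχ.symm
  have HPO2 : IsPushout κ χ b k := by
    -- ξ and ν
    obtain ⟨ξ, hξ, -⟩ := S.is_kernel hκE (b ≫ s0 - 𝟙 U)
      (by
        rw [Preadditive.sub_comp, Category.id_comp, ← Category.assoc, Category.assoc b s0 b,
          hs0b, Category.comp_id, sub_self])
    have hξχ : ξ ≫ χ = 0 := by
      have h2 : (ξ ≫ χ) ≫ k = 0 ≫ k := by
        rw [Category.assoc, ← hcomm17, ← Category.assoc, hξ, Limits.zero_comp]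
        rw [Preadditive.sub_comp, Category.id_comp, Category.assoc, hs0b, Category.comp_id,
          sub_self]
      exact (cancel_mono k).mp h2
    obtain ⟨ν, hν, -⟩ := S.is_kernel hκE (k ≫ s0)
      (by rw [Category.assoc, ← Category.assoc s0 b g, hs0b, Category.id_comp, hkg])
    have hνχ : ν ≫ χ = 𝟙 K := by
      have h2 : (ν ≫ χ) ≫ k = 𝟙 K ≫ k := by
        rw [Category.assoc, ← hcomm17, ← Category.assoc, hν, Category.assoc,
          hs0b, Category.comp_id, Category.id_comp]
      exact (cancel_mono k).mp h2
    apply IsPushout.of_isColimit (c := PushoutCocone.mk b k hcomm17)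
    refine PushoutCocone.IsColimit.mk hcomm17 (fun s => s0 ≫ s.inl) ?_ ?_ ?_
    · intro s
      have h1 : (b ≫ s0 - 𝟙 U) ≫ s.inl = 0 := by
        rw [← hξ, Category.assoc, s.condition, ← Category.assoc, hξχ, Limits.zero_comp]
      rw [Preadditive.sub_comp, Category.id_comp, sub_eq_zero] at h1
      rw [← Category.assoc]; exact h1
    · intro s
      rw [← Category.assoc, ← hν, Category.assoc, s.condition, ← Category.assoc, hνχ,
        Category.id_comp]
    · intro s m hm1 hm2
      calc m = (s0 ≫ b) ≫ m := by rw [hs0b, Category.id_comp]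
      _ = s0 ≫ s.inl := by rw [Category.assoc, hm1]
  -- Step 18: pushout_infl on κ, χ
  obtain ⟨P₄, j₄, g₄, H₄, ⟨T₄, t₄, ht₄⟩⟩ := S.pushout_infl κ χ ⟨P, b ≫ g, hκE⟩
  -- Step 19-20: transport the conflation
  obtain ⟨ζ, hζj⟩ : ∃ ζ : P₄ ≅ W, j₄ ≫ ζ.hom = k :=
    ⟨_, IsPushout.inr_isoIsPushout_hom (h := H₄) (h' := HPO2)⟩
  have hconf5 := S.conf_iso (Iso.refl K) ζ (Iso.refl T₄) ht₄
  simp only [Iso.refl_inv, Iso.refl_hom, Category.id_comp, Category.comp_id] at hconf5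
  rw [hζj] at hconf5
  -- hconf5 : S.conf k (ζ.inv ≫ t₄)
  have epi_t₅ : Epi (ζ.inv ≫ t₄) := S.epi_of_conf hconf5
  have hkt₅ : k ≫ (ζ.inv ≫ t₄) = 0 := S.comp_zero hconf5
  -- Step 21: ω : T₄ ≅ P
  obtain ⟨ω, hω, -⟩ := S.is_cokernel hconf5 g hkg
  obtain ⟨ω', hω', -⟩ := hcoker_g (ζ.inv ≫ t₄) hkt₅
  have hωω' : ω ≫ ω' = 𝟙 T₄ := by
    rw [← cancel_epi (ζ.inv ≫ t₄), ← Category.assoc, hω, hω', Category.comp_id]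
  have hω'ω : ω' ≫ ω = 𝟙 P := by
    rw [← cancel_epi g, ← Category.assoc, hω', hω, Category.comp_id]
  -- Step 22: conf k g
  have hconf6 := S.conf_isoCod (Iso.mk ω ω' hωω' hω'ω) hconf5
  rw [show (Iso.mk ω ω' hωω' hω'ω).hom = ω from rfl, hω] at hconf6
  -- Step 23
  exact ⟨P, j, g, HPO.flip, ⟨K, k, hconf6⟩⟩

/-- Pullback half. -/
theorem pb_half (S : ExactStructure E) :
    ∀ {X Z Y : E} (i : X ⟶ Z) (d : Y ⟶ Z), S.IsInflation i → S.IsDeflation d →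
      ∃ (P : E) (p₁ : P ⟶ X) (p₂ : P ⟶ Y), IsPullback p₁ p₂ i d ∧ S.IsInflation p₂ := by
  rintro X Z Y i d ⟨C, p, hip⟩ ⟨A, iY, hiY⟩
  obtain ⟨M, κ, hκ⟩ := S.defl_comp ⟨A, iY, hiY⟩ ⟨X, i, hip⟩
  have hκ0 : κ ≫ d ≫ p = 0 := S.comp_zero hκ
  have mono_i : Mono i := S.mono_of_conf hip
  have mono_κ : Mono κ := S.mono_of_conf hκ
  obtain ⟨p₁, hp₁, -⟩ := S.is_kernel hip (κ ≫ d)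
    (by rw [Category.assoc]; exact hκ0)
  -- the square p₁ ≫ i = κ ≫ d
  have lift0 : ∀ s : PullbackCone i d, ∃! l : s.pt ⟶ M, l ≫ κ = s.snd := by
    intro s
    apply S.is_kernel hκ s.snd
    rw [← Category.assoc, ← s.condition, Category.assoc, S.comp_zero hip, Limits.comp_zero]
  refine ⟨M, p₁, κ, ?_, ⟨C, d ≫ p, hκ⟩⟩
  apply IsPullback.of_isLimit (c := PullbackCone.mk p₁ κ hp₁)
  refine PullbackCone.IsLimit.mk hp₁ (fun s => (lift0 s).exists.choose) ?_ ?_ ?_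
  · intro s
    have hsnd : (lift0 s).exists.choose ≫ κ = s.snd := (lift0 s).exists.choose_spec
    rw [← cancel_mono i]
    rw [Category.assoc, hp₁, ← Category.assoc, hsnd, s.condition]
  · intro s
    exact (lift0 s).exists.choose_spec
  · intro s m hm1 hm2
    rw [← cancel_mono κ, hm2, (lift0 s).exists.choose_spec]

/-- In an exact category, the pullback of an inflation along a deflation
exists and is an inflation, and the pushout of a deflation along an inflation exists and
is a deflation. -/
theorem pullback_inflation_pushout_deflation (S : ExactStructure E) :
    (∀ {X Z Y : E} (i : X ⟶ Z) (d : Y ⟶ Z), S.IsInflation i → S.IsDeflation d →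
      ∃ (P : E) (p₁ : P ⟶ X) (p₂ : P ⟶ Y), IsPullback p₁ p₂ i d ∧ S.IsInflation p₂) ∧
    (∀ {X Y W : E} (d : X ⟶ Y) (i : X ⟶ W), S.IsDeflation d → S.IsInflation i →
      ∃ (P : E) (q₁ : Y ⟶ P) (q₂ : W ⟶ P), IsPushout d i q₁ q₂ ∧ S.IsDeflation q₂) :=
  ⟨fun i d hi hd => pb_half S i d hi hd, fun d i hd hi => po_half S d i hd hi⟩

end ExactCatPaper
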